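/- Let X be a pure k-dimensional simplicial complex, f : X(k) → {±1}, and X̂ the f-local lift. For any face σ̂ ∈ X̂ of dimension strictly less than k-2, the 1-skeleton of the link X̂_{σ̂} is isomorphic to the tensor product of the 1-skeleton of X_{π(σ̂)} with the complete graph on two vertices with self loops, where π forgets the signs. -/
import Mathlib


open scoped Classical
noncomputable section

namespace HDX

variable {V W : Type*}

/-- sign of a Bool as an integer (`true ↦ 1`, `false ↦ -1`). -/
def sgn (b : Bool) : ℤ := if b then 1 else -1

/-- projection forgetting signs -/
def proj [DecidableEq V] (σ : Finset (V × Bool)) : Finset V := σ.image Prod.fst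

/-- product of the signs of a decorated face -/
def signF (σ : Finset (V × Bool)) : ℤ := ∏ x ∈ σ, sgn x.2

/-- the `f`-local lift of a `k`-dimensional complex `X` -/
def localLift [Fintype V] [DecidableEq V] (X : Finset (Finset V)) (f : Finset V → ℤ)
    (k : ℕ) : Finset (Finset (V × Bool)) :=
  Finset.univ.filter (fun σ' => proj σ' ∈ X ∧ σ'.card = (proj σ').card ∧
    (σ'.card = k + 1 → signF σ' = f (proj σ')))

/-- the link of a face -/
def link [DecidableEq W] (X : Finset (Finset W)) (σ : Finset W) : Finset (Finset W) :=
  (X.filter (fun τ => σ ⊆ τ)).image (fun τ => τ \ σ)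

/-- degree of a face: the number of faces of one higher dimension containing it -/
def deg [DecidableEq W] (X : Finset (Finset W)) (σ : Finset W) : ℕ :=
  (X.filter (fun τ => σ ⊆ τ ∧ τ.card = σ.card + 1)).card

/-- a simplicial complex: downward closed (to nonempty subsets) -/
def DownwardClosed (X : Finset (Finset W)) : Prop :=
  ∀ τ ∈ X, ∀ σ : Finset W, σ ⊆ τ → σ.Nonempty → σ ∈ X

/-- pure `k`-dimensional -/
def Pure (X : Finset (Finset W)) (k : ℕ) : Prop :=
  (∀ τ ∈ X, τ.card ≤ k + 1) ∧ ∀ τ ∈ X, ∃ ρ ∈ X, τ ⊆ ρ ∧ ρ.card = k + 1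

/-- `(d 0, …, d (k-1))`-regular -/
def Regular (X : Finset (Finset W)) (k : ℕ) (d : ℕ → ℕ) : Prop :=
  ∀ i < k, ∀ σ ∈ X, σ.card = i + 1 → deg X σ = d i

/-- the vertices of the link of `σ` -/
def linkVert [DecidableEq W] (X : Finset (Finset W)) (σ : Finset W) : Type _ :=
  {v : W // {v} ∈ link X σ}

instance [Fintype W] [DecidableEq W] (X : Finset (Finset W)) (σ : Finset W) :
    Fintype (linkVert X σ) := Subtype.fintype _

instance [DecidableEq W] (X : Finset (Finset W)) (σ : Finset W) :
    DecidableEq (linkVert X σ) := Subtype.instDecidableEq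

/-- random walk matrix of the 1-skeleton of the link of `σ`, normalized by `dreg` -/
def linkRW [Fintype W] [DecidableEq W] (X : Finset (Finset W)) (σ : Finset W) (dreg : ℕ) :
    Matrix (linkVert X σ) (linkVert X σ) ℝ :=
  fun u w => if u.1 ≠ w.1 ∧ {u.1, w.1} ∈ link X σ then (dreg : ℝ)⁻¹ else 0

/-- signed random walk matrix of the 1-skeleton of the link of `σ` -/
def linkRWSigned [Fintype W] [DecidableEq W] (X : Finset (Finset W)) (σ : Finset W)
    (dreg : ℕ) (g : Finset W → ℤ) : Matrix (linkVert X σ) (linkVert X σ) ℝ :=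
  fun u w => if u.1 ≠ w.1 ∧ {u.1, w.1} ∈ link X σ then (g {u.1, w.1} : ℝ) / (dreg : ℝ) else 0

/-- largest absolute value of the eigenvalues other than (one copy of) the trivial
eigenvalue `1`, of a matrix: computed via the roots of the characteristic polynomial. -/
def lam {n : Type*} [Fintype n] [DecidableEq n] (M : Matrix n n ℝ) : ℝ :=
  (((M.charpoly.roots).erase 1).map (fun x => |x|)).fold max 0

/-- `λ`-two sided high dimensional expander (links normalized by their regular degrees) -/
def IsHDX [Fintype W] [DecidableEq W] (X : Finset (Finset W)) (k : ℕ) (d : ℕ → ℕ)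
    (l : ℝ) : Prop :=
  ∀ σ : Finset W, (σ = ∅ ∨ σ ∈ X) → σ.card ≤ k - 1 → lam (linkRW X σ (d σ.card)) ≤ l

/-- the ordered pairs in `S × T` that form an edge of the link of `σ` -/
def pairs [DecidableEq W] (X : Finset (Finset W)) (σ : Finset W) (S T : Finset W) :
    Finset (W × W) :=
  (S ×ˢ T).filter (fun p => p.1 ≠ p.2 ∧ {p.1, p.2} ∈ link X σ)

/-- `⟨1_S, A_σ 1_T⟩` for the random walk matrix of the link of `σ` -/
def innerRW [DecidableEq W] (X : Finset (Finset W)) (σ : Finset W) (dtop : ℕ)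
    (S T : Finset W) : ℝ :=
  ((pairs X σ S T).card : ℝ) / (dtop : ℝ)

/-- `⟨1_S, A_σ^g 1_T⟩` for the `g`-signed random walk matrix of the link of `σ` -/
def innerRWSigned [DecidableEq W] (X : Finset (Finset W)) (σ : Finset W) (dtop : ℕ)
    (g : Finset W → ℤ) (S T : Finset W) : ℝ :=
  (∑ p ∈ pairs X σ S T, (g {p.1, p.2} : ℝ)) / (dtop : ℝ)

/-- `(β, t)`-sparseness -/
def IsSparse [Fintype W] [DecidableEq W] (X : Finset (Finset W)) (k dtop : ℕ)
    (β t : ℝ) : Prop :=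
  ∀ σ ∈ X, σ.card = k - 1 → ∀ S T : Finset W,
    (∀ v ∈ S ∪ T, {v} ∈ link X σ) → ((S ∪ T).card : ℝ) ≤ t →
    innerRW X σ dtop S T ≤ β * Real.sqrt ((S.card : ℝ) * (T.card : ℝ))

lemma mem_link_iff [DecidableEq W] (X : Finset (Finset W)) (σ τ : Finset W) :
    τ ∈ link X σ ↔ ∃ ρ, ρ ∈ X ∧ σ ⊆ ρ ∧ ρ \ σ = τ := by
  simp [link, Finset.mem_image, Finset.mem_filter, and_assoc]

lemma link_forward [Fintype V] [DecidableEq V] (X : Finset (Finset V)) (f : Finset V → ℤ)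
    (k : ℕ) (σ' τ' : Finset (V × Bool)) (h : τ' ∈ link (localLift X f k) σ') :
    proj τ' ∈ link X (proj σ') ∧ (proj τ').card = τ'.card := by
  rw [mem_link_iff] at h
  obtain ⟨ρ, hρ, hsub, hdiff⟩ := h
  simp only [localLift, Finset.mem_filter, Finset.mem_univ, true_and] at hρ
  obtain ⟨hXρ, hcρ, -⟩ := hρ
  have hinj : Set.InjOn Prod.fst (ρ : Set (V × Bool)) :=
    Finset.card_image_iff.mp hcρ.symm
  have hτsub : τ' ⊆ ρ := hdiff ▸ Finset.sdiff_subset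
  have hprojdiff : proj τ' = proj ρ \ proj σ' := by
    subst hdiff
    ext w
    simp only [proj, Finset.mem_image, Finset.mem_sdiff]
    constructor
    · rintro ⟨x, ⟨hx1, hx2⟩, rfl⟩
      refine ⟨⟨x, hx1, rfl⟩, ?_⟩
      rintro ⟨y, hy, hyx⟩
      exact hx2 (hinj (Finset.mem_coe.mpr (hsub hy)) (Finset.mem_coe.mpr hx1) hyx ▸ hy)
    · rintro ⟨⟨x, hx, rfl⟩, hw⟩
      exact ⟨x, ⟨hx, fun hxσ => hw ⟨x, hxσ, rfl⟩⟩, rfl⟩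
  constructor
  · rw [mem_link_iff]
    exact ⟨proj ρ, hXρ, Finset.image_subset_image hsub, hprojdiff.symm⟩
  · exact Finset.card_image_iff.mpr (hinj.mono (by exact_mod_cast hτsub))

lemma link_backward [Fintype V] [DecidableEq V] (X : Finset (Finset V)) (f : Finset V → ℤ)
    (k : ℕ) (σ' τ' : Finset (V × Bool)) (hσ : σ' ∈ localLift X f k)
    (hcτ : (proj τ').card = τ'.card) (hsmall : σ'.card + τ'.card ≤ k)
    (h : proj τ' ∈ link X (proj σ')) : τ' ∈ link (localLift X f k) σ' := by
  simp only [localLift, Finset.mem_filter, Finset.mem_univ, true_and] at hσ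
  obtain ⟨hXσ, hcσ, -⟩ := hσ
  rw [mem_link_iff] at h
  obtain ⟨τ, hτX, hτsub, hτdiff⟩ := h
  have hdisproj : Disjoint (proj σ') (proj τ') := by
    rw [← hτdiff]; exact Finset.disjoint_sdiff
  have hdis : Disjoint σ' τ' := by
    rw [Finset.disjoint_left]
    intro x hx hx'
    exact Finset.disjoint_left.mp hdisproj
      (Finset.mem_image.mpr ⟨x, hx, rfl⟩) (Finset.mem_image.mpr ⟨x, hx', rfl⟩)
  have hprojU : proj (σ' ∪ τ') = τ := by
    rw [proj, Finset.image_union, ← proj, ← proj, ← hτdiff,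
      Finset.union_sdiff_of_subset hτsub]
  have hcardU : (σ' ∪ τ').card = (proj (σ' ∪ τ')).card := by
    rw [hprojU, ← Finset.union_sdiff_of_subset hτsub, hτdiff,
      Finset.card_union_of_disjoint hdis, Finset.card_union_of_disjoint hdisproj,
      hcσ, hcτ]
  rw [mem_link_iff]
  refine ⟨σ' ∪ τ', ?_, Finset.subset_union_left, Finset.union_sdiff_cancel_left hdis⟩
  simp only [localLift, Finset.mem_filter, Finset.mem_univ, true_and]
  refine ⟨hprojU ▸ hτX, hcardU, fun hc => absurd hc ?_⟩
  have := Finset.card_union_of_disjoint hdis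
  omega

/-- for a face `σ'` of the `f`-local lift of dimension strictly less
than `k-2` (i.e. `|σ'| < k-1`), the 1-skeleton of the link of `σ'` in the lift is
isomorphic (via the identity on underlying data) to the tensor product of the
1-skeleton of the link of `π(σ')` in `X` with the complete graph on two vertices
with self loops: the vertices of the link come in both signs, adjacency ignores the
signs, and there are no edges between the two copies of a single vertex. -/
theorem localLift_link_tensor {V : Type*} [Fintype V] [DecidableEq V]
    (k : ℕ) (hk : 2 ≤ k) (X : Finset (Finset V)) (hdc : DownwardClosed X)
    (hpure : Pure X k) (f : Finset V → ℤ) (hf : ∀ τ, f τ = 1 ∨ f τ = -1)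
    (σ' : Finset (V × Bool)) (hmem : σ' ∈ localLift X f k) (hdim : σ'.card < k - 1) :
    (∀ (v : V) (i : Bool),
      ({(v, i)} : Finset (V × Bool)) ∈ link (localLift X f k) σ' ↔
        ({v} : Finset V) ∈ link X (proj σ')) ∧
    (∀ (v u : V) (i j : Bool), v ≠ u →
      (({(v, i), (u, j)} : Finset (V × Bool)) ∈ link (localLift X f k) σ' ↔
        ({v, u} : Finset V) ∈ link X (proj σ'))) ∧
    (∀ (v : V) (i j : Bool), i ≠ j →
      ({(v, i), (v, j)} : Finset (V × Bool)) ∉ link (localLift X f k) σ') := by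
  refine ⟨?_, ?_, ?_⟩
  · intro v i
    constructor
    · intro h
      have H := (link_forward X f k σ' _ h).1
      simpa [proj] using H
    · intro h
      refine link_backward X f k σ' _ hmem (by simp [proj]) (by simp; omega) ?_
      simpa [proj] using h
  · intro v u i j hvu
    have hne : ((v, i) : V × Bool) ≠ (u, j) := by simp [hvu]
    have hproj : proj ({(v, i), (u, j)} : Finset (V × Bool)) = {v, u} := by
      simp [proj]
    constructor
    · intro h
      have H := (link_forward X f k σ' _ h).1
      rwa [hproj] at H
    · intro h
      refine link_backward X f k σ' _ hmem ?_ ?_ ?_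
      · rw [hproj, Finset.card_insert_of_notMem (by simp [hvu]),
          Finset.card_insert_of_notMem (by simp [hne]), Finset.card_singleton,
          Finset.card_singleton]
      · rw [Finset.card_insert_of_notMem (by simp [hne]), Finset.card_singleton]
        omega
      · rwa [hproj]
  · intro v i j hij h
    have H := (link_forward X f k σ' _ h).2
    have h1 : proj ({(v, i), (v, j)} : Finset (V × Bool)) = {v} := by
      simp [proj]
    have h2 : ({(v, i), (v, j)} : Finset (V × Bool)).card = 2 := by
      rw [Finset.card_insert_of_notMem (by simp [hij]), Finset.card_singleton]
    rw [h1, h2, Finset.card_singleton] at H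
    omega

end HDX
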